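/- arXiv:1703.09965 — 2 statements merged into one kernel-verified Lean document; each statement's English description precedes it below -/
import Mathlib

section
/- Let p ≥ 2 be an integer and r a real number with 0 < r < 1, and let w₀ = (1/p, …, 1/p) ∈ ℝ^p. For every vector w ∈ ℝ^p with wᵢ ≥ 0 for all i and Σᵢ wᵢ = 1, one has Q(w,r) ≥ Q(w₀,r) = 1/(p + p(p−1)r); that is, the average group effect τ_a = (1/p)Σᵢ βᵢ is the optimal (most accurately estimable) properly weighted group effect at every fixed multicollinearity level r. -/
open Matrix

/-- The `p × p` Gram/correlation matrix of a uniform model at multicollinearity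
level `r`: diagonal entries `1`, off-diagonal entries `r`. -/
noncomputable def unifMat (p : ℕ) (r : ℝ) : Matrix (Fin p) (Fin p) ℝ :=
  fun i j => if i = j then 1 else r

/-- `Q(w,r) = wᵀ A(p,r)⁻¹ w`. -/
noncomputable def Qform (p : ℕ) (r : ℝ) (w : Fin p → ℝ) : ℝ :=
  w ⬝ᵥ (unifMat p r)⁻¹.mulVec w

lemma unifMat_inv (p : ℕ) (hp : 2 ≤ p) (r : ℝ) (hr0 : 0 < r) (hr1 : r < 1) :
    (unifMat p r)⁻¹ = fun i j =>
      if i = j then (1 + ((p:ℝ) - 2) * r) / ((1 - r) * (1 + ((p:ℝ) - 1) * r))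
      else -r / ((1 - r) * (1 + ((p:ℝ) - 1) * r)) := by
  have hp2 : (2:ℝ) ≤ (p:ℝ) := by exact_mod_cast hp
  have h1r : (0:ℝ) < 1 - r := by linarith
  have hD : (0:ℝ) < 1 + ((p:ℝ) - 1) * r := by nlinarith
  have h1r' : (1:ℝ) - r ≠ 0 := ne_of_gt h1r
  have hD' : (1:ℝ) + ((p:ℝ) - 1) * r ≠ 0 := ne_of_gt hD
  have hX : (1:ℝ) - r + r * (p:ℝ) ≠ 0 := by nlinarith
  set d : ℝ := (1 + ((p:ℝ) - 2) * r) / ((1 - r) * (1 + ((p:ℝ) - 1) * r)) with hd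
  set e : ℝ := -r / ((1 - r) * (1 + ((p:ℝ) - 1) * r)) with he
  apply Matrix.inv_eq_right_inv
  ext i j
  erw [Matrix.mul_apply, Matrix.one_apply]
  have key : ∀ k : Fin p, unifMat p r i k * (if k = j then d else e) =
      r * e + (if k = j then r * (d - e) else 0) + (if k = i then (1 - r) * e else 0)
        + (if k = i then (if i = j then (1 - r) * (d - e) else 0) else 0) := by
    intro k
    unfold unifMat
    by_cases h1 : i = k
    · subst h1
      by_cases h2 : i = j
      · subst h2; simp; ring
      · simp [h2]; ring
    · have h1' : ¬ k = i := fun h => h1 h.symm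
      by_cases h2 : k = j
      · subst h2
        simp [h1, h1']; ring
      · simp [h1, h1', h2]
  rw [Finset.sum_congr rfl (fun k _ => key k)]
  simp only [Finset.sum_add_distrib, Finset.sum_const, Finset.sum_ite_eq',
    Finset.mem_univ, if_true, Finset.card_univ, Fintype.card_fin, nsmul_eq_mul]
  by_cases hij : i = j <;> simp [hij] <;> rw [hd, he] <;> field_simp
  · linear_combination (1 - r) * mul_inv_cancel₀ hX
  · ring

lemma Qform_eq (p : ℕ) (hp : 2 ≤ p) (r : ℝ) (hr0 : 0 < r) (hr1 : r < 1) (w : Fin p → ℝ) :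
    Qform p r w = (-r / ((1 - r) * (1 + ((p:ℝ) - 1) * r))) * (∑ i, w i)^2
      + (1 / (1 - r)) * ∑ i, (w i)^2 := by
  have hp2 : (2:ℝ) ≤ (p:ℝ) := by exact_mod_cast hp
  have h1r : (0:ℝ) < 1 - r := by linarith
  have hD : (0:ℝ) < 1 + ((p:ℝ) - 1) * r := by nlinarith
  have h1r' : (1:ℝ) - r ≠ 0 := ne_of_gt h1r
  have hD' : (1:ℝ) + ((p:ℝ) - 1) * r ≠ 0 := ne_of_gt hD
  set d : ℝ := (1 + ((p:ℝ) - 2) * r) / ((1 - r) * (1 + ((p:ℝ) - 1) * r)) with hd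
  set e : ℝ := -r / ((1 - r) * (1 + ((p:ℝ) - 1) * r)) with he
  have hde : d - e = 1 / (1 - r) := by
    rw [hd, he, div_sub_div_same, div_eq_div_iff (mul_ne_zero h1r' hD') h1r']; ring
  rw [Qform, unifMat_inv p hp r hr0 hr1]
  have hmv : ∀ i, Matrix.mulVec (fun i j => if i = j then d else e) w i
      = e * (∑ k, w k) + (d - e) * w i := by
    intro i
    simp only [Matrix.mulVec, dotProduct]
    have hterm : ∀ k : Fin p, (if i = k then d else e) * w k
        = e * w k + (if k = i then (d - e) * w k else 0) := by
      intro k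
      by_cases h : i = k
      · subst h; simp; ring
      · have h' : ¬ k = i := fun hh => h hh.symm
        simp [h, h']
    rw [Finset.sum_congr rfl (fun k _ => hterm k)]
    rw [Finset.sum_add_distrib, Finset.sum_ite_eq', ← Finset.mul_sum]
    simp
  rw [dotProduct]
  rw [Finset.sum_congr rfl (fun i _ => by rw [hmv i])]
  have expand : ∀ i : Fin p, w i * (e * (∑ k, w k) + (d - e) * w i)
      = (e * (∑ k, w k)) * w i + (d - e) * (w i)^2 := fun i => by ring
  rw [Finset.sum_congr rfl (fun i _ => expand i), Finset.sum_add_distrib,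
    ← Finset.mul_sum, ← Finset.mul_sum, hde]
  ring

/-- with `w₀ = (1/p, …, 1/p)`, for every nonnegative weight vector
`w` summing to 1 one has `Q(w,r) ≥ Q(w₀,r) = 1/(p + p(p−1)r)`; the average group
effect is optimal at every fixed multicollinearity level `r`. -/
theorem average_group_effect_optimal (p : ℕ) (hp : 2 ≤ p) (r : ℝ)
    (hr0 : 0 < r) (hr1 : r < 1) :
    Qform p r (fun _ => 1 / (p : ℝ)) = 1 / ((p : ℝ) + (p : ℝ) * ((p : ℝ) - 1) * r) ∧
    (∀ w : Fin p → ℝ, (∀ i, 0 ≤ w i) → (∑ i, w i) = 1 →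
      Qform p r (fun _ => 1 / (p : ℝ)) ≤ Qform p r w) := by
  have hp2 : (2:ℝ) ≤ (p:ℝ) := by exact_mod_cast hp
  have h1r : (0:ℝ) < 1 - r := by linarith
  have hD : (0:ℝ) < 1 + ((p:ℝ) - 1) * r := by nlinarith
  have hP : (0:ℝ) < (p:ℝ) := by linarith
  have h1r' : (1:ℝ) - r ≠ 0 := ne_of_gt h1r
  have hD' : (1:ℝ) + ((p:ℝ) - 1) * r ≠ 0 := ne_of_gt hD
  have hX : (1:ℝ) - r + r * (p:ℝ) ≠ 0 := by nlinarith
  have hP' : (p:ℝ) ≠ 0 := ne_of_gt hP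
  have hB : (0:ℝ) < (p:ℝ) + (p:ℝ) * ((p:ℝ) - 1) * r := by nlinarith
  have hB' : (p:ℝ) + (p:ℝ) * ((p:ℝ) - 1) * r ≠ 0 := ne_of_gt hB
  have hsum0 : (∑ _i : Fin p, (1:ℝ) / (p:ℝ)) = 1 := by
    simp [Finset.sum_const, Finset.card_univ]
    field_simp
  have hsq0 : (∑ _i : Fin p, ((1:ℝ) / (p:ℝ))^2) = 1 / (p:ℝ) := by
    simp [Finset.sum_const, Finset.card_univ]
    field_simp
  have hQ0 : Qform p r (fun _ => 1 / (p : ℝ))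
      = 1 / ((p : ℝ) + (p : ℝ) * ((p : ℝ) - 1) * r) := by
    rw [Qform_eq p hp r hr0 hr1, hsum0, hsq0]
    field_simp
    linear_combination (-1) * mul_inv_cancel₀ hX
  refine ⟨hQ0, fun w hw hsum => ?_⟩
  rw [hQ0, Qform_eq p hp r hr0 hr1 w, hsum]
  have hcs : ((1:ℝ)) ≤ (p:ℝ) * ∑ i, (w i)^2 := by
    have h := sq_sum_le_card_mul_sum_sq (s := Finset.univ) (f := w)
    rw [hsum, Finset.card_univ, Fintype.card_fin] at h
    simpa using h
  have h1p : (1:ℝ)/(p:ℝ) ≤ ∑ i, (w i)^2 := by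
    rw [div_le_iff₀ hP]; linarith
  have hQ0' : 1 / ((p : ℝ) + (p : ℝ) * ((p : ℝ) - 1) * r)
      = (-r / ((1 - r) * (1 + ((p:ℝ) - 1) * r))) * (1:ℝ)^2 + (1 / (1 - r)) * (1/(p:ℝ)) := by
    field_simp
    ring
  rw [hQ0']
  have hpos : (0:ℝ) < 1/(1-r) := by positivity
  nlinarith [hpos, h1p]
end

section
/- Let p ≥ 2 be an integer, s ∈ ℝ^p with sᵢ > 0 for all i, and σ² > 0. The function r ↦ σ² · Q_S(w_w, r) = σ² p / ((Σᵢ sᵢ)²(1+(p−1)r)) is strictly monotone decreasing on the interval (0,1), and it tends to σ²/(Σᵢ sᵢ)² as r → 1 from the left; that is, the variance of the estimator of the variability weighted group effect τ_w strictly decreases in the multicollinearity level r, with limiting value σ²/(Σᵢ sᵢ)². -/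
open Matrix Filter Topology

/-- `Q_S(w,r) = wᵀ S⁻¹ A(p,r)⁻¹ S⁻¹ w` with `S = diag s`. -/
noncomputable def QSform (p : ℕ) (r : ℝ) (s w : Fin p → ℝ) : ℝ :=
  (fun i => w i / s i) ⬝ᵥ (unifMat p r)⁻¹.mulVec (fun i => w i / s i)

/-- explicit inverse candidate -/
noncomputable def unifInv (p : ℕ) (r : ℝ) : Matrix (Fin p) (Fin p) ℝ :=
  fun i j => if i = j then (1 + ((p : ℝ) - 2) * r) / ((1 - r) * (1 + ((p : ℝ) - 1) * r))
             else -r / ((1 - r) * (1 + ((p : ℝ) - 1) * r))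

lemma unifMat_mul_unifInv (p : ℕ) (hp : 2 ≤ p) (r : ℝ) (hr : r ∈ Set.Ioo (0:ℝ) 1) :
    unifMat p r * unifInv p r = 1 := by
  obtain ⟨hr0, hr1⟩ := hr
  have hp1 : (1:ℝ) ≤ (p : ℝ) := by exact_mod_cast Nat.one_le_of_lt hp
  have h1 : (1 - r) ≠ 0 := by linarith
  have h2 : (1 + ((p : ℝ) - 1) * r) ≠ 0 := by nlinarith
  set a : ℝ := (1 + ((p : ℝ) - 2) * r) / ((1 - r) * (1 + ((p : ℝ) - 1) * r)) with ha
  set b : ℝ := -r / ((1 - r) * (1 + ((p : ℝ) - 1) * r)) with hb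
  ext i j
  rw [Matrix.mul_apply]
  simp only [unifMat, unifInv, Matrix.one_apply, ← ha, ← hb]
  by_cases h : i = j
  · subst h
    have : ∀ k : Fin p, (if i = k then (1:ℝ) else r) * (if k = i then a else b)
        = r * b + (if k = i then a - r * b else 0) := by
      intro k
      by_cases hk : k = i
      · subst hk; simp
      · simp [hk, Ne.symm hk] <;> ring
    rw [Finset.sum_congr rfl (fun k _ => this k)]
    rw [Finset.sum_add_distrib, Finset.sum_const, Finset.sum_ite_eq' Finset.univ i]
    simp only [Finset.mem_univ, if_true, Finset.card_univ, Fintype.card_fin, nsmul_eq_mul, if_pos rfl]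
    rw [ha, hb]
    simp only [div_eq_mul_inv]
    linear_combination (mul_inv_cancel₀ (mul_ne_zero h1 h2))
  · have hji : j ≠ i := fun h' => h h'.symm
    have : ∀ k : Fin p, (if i = k then (1:ℝ) else r) * (if k = j then a else b)
        = r * b + (if k = i then b - r * b else 0) + (if k = j then r * a - r * b else 0) := by
      intro k
      by_cases hk : k = i
      · subst hk; simp [h, Ne.symm h] <;> ring
      · by_cases hk' : k = j
        · subst hk'; simp [hk, Ne.symm hk, h] <;> ring
        · simp [hk, hk', Ne.symm hk, Ne.symm hk'] <;> ring
    rw [Finset.sum_congr rfl (fun k _ => this k)]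
    rw [Finset.sum_add_distrib, Finset.sum_add_distrib, Finset.sum_const,
      Finset.sum_ite_eq' Finset.univ i, Finset.sum_ite_eq' Finset.univ j]
    simp only [Finset.mem_univ, if_true, Finset.card_univ, Fintype.card_fin, nsmul_eq_mul, if_neg h]
    rw [ha, hb]
    field_simp
    ring

lemma unifMat_inv_eq (p : ℕ) (hp : 2 ≤ p) (r : ℝ) (hr : r ∈ Set.Ioo (0:ℝ) 1) :
    (unifMat p r)⁻¹ = unifInv p r :=
  Matrix.inv_eq_right_inv (unifMat_mul_unifInv p hp r hr)

lemma QSform_eq (p : ℕ) (hp : 2 ≤ p) (r : ℝ) (hr : r ∈ Set.Ioo (0:ℝ) 1)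
    (s : Fin p → ℝ) (hs : ∀ i, 0 < s i) :
    QSform p r s (fun i => s i / ∑ j, s j) =
      (p : ℝ) / ((∑ i, s i) ^ 2 * (1 + ((p : ℝ) - 1) * r)) := by
  obtain ⟨hr0, hr1⟩ := hr
  have hp1 : (1:ℝ) ≤ (p : ℝ) := by exact_mod_cast Nat.one_le_of_lt hp
  have h1 : (1 - r) ≠ 0 := by linarith
  have h2 : (1 + ((p : ℝ) - 1) * r) ≠ 0 := by nlinarith
  have hT : 0 < ∑ i, s i := by
    have : 0 < Fintype.card (Fin p) := by simp; omega
    exact Finset.sum_pos (fun i _ => hs i) (Finset.univ_nonempty_iff.mpr ⟨⟨0, by omega⟩⟩)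
  set T := ∑ i, s i with hTdef
  have hv : (fun i => (s i / T) / s i) = fun _ : Fin p => 1 / T := by
    funext i
    rw [div_right_comm, div_self (hs i).ne']
  set a : ℝ := (1 + ((p : ℝ) - 2) * r) / ((1 - r) * (1 + ((p : ℝ) - 1) * r)) with ha
  set b : ℝ := -r / ((1 - r) * (1 + ((p : ℝ) - 1) * r)) with hb
  have hmv : (unifInv p r).mulVec (fun _ : Fin p => 1 / T) =
      fun _ => (a + ((p : ℝ) - 1) * b) * (1 / T) := by
    funext i
    rw [Matrix.mulVec]
    simp only [dotProduct, unifInv, ← ha, ← hb]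
    have : ∀ k : Fin p, (if i = k then a else b) * (1 / T)
        = b * (1 / T) + (if k = i then (a - b) * (1 / T) else 0) := by
      intro k
      by_cases hk : k = i
      · subst hk; simp; ring
      · simp [hk, Ne.symm hk] <;> ring
    rw [Finset.sum_congr rfl (fun k _ => this k)]
    rw [Finset.sum_add_distrib, Finset.sum_const, Finset.sum_ite_eq' Finset.univ i]
    simp only [Finset.mem_univ, if_true, Finset.card_univ, Fintype.card_fin, nsmul_eq_mul]
    ring
  rw [QSform, hv, unifMat_inv_eq p hp r ⟨hr0, hr1⟩, hmv]
  simp only [dotProduct, Finset.sum_const, Finset.card_univ, Fintype.card_fin,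
    nsmul_eq_mul]
  have key : a + ((p : ℝ) - 1) * b = 1 / (1 + ((p : ℝ) - 1) * r) := by
    have hstep : a + ((p : ℝ) - 1) * b =
        ((1 + ((p : ℝ) - 2) * r) + ((p : ℝ) - 1) * (-r)) /
          ((1 - r) * (1 + ((p : ℝ) - 1) * r)) := by
      rw [ha, hb]; ring
    rw [hstep, show (1 + ((p : ℝ) - 2) * r) + ((p : ℝ) - 1) * (-r) = 1 - r by ring,
      div_mul_eq_div_div, div_self h1]
  rw [key]
  have hT0 : T ≠ 0 := hT.ne'
  field_simp

/-- the function `r ↦ σ²·Q_S(w_w, r) = σ²p/((Σᵢ sᵢ)²(1+(p−1)r))`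
is strictly decreasing on `(0,1)` and tends to `σ²/(Σᵢ sᵢ)²` as `r → 1⁻`. -/
theorem QS_variability_weight_variance_decreasing (p : ℕ) (hp : 2 ≤ p)
    (s : Fin p → ℝ) (hs : ∀ i, 0 < s i) (σ2 : ℝ) (hσ2 : 0 < σ2) :
    (∀ r ∈ Set.Ioo (0 : ℝ) 1,
      σ2 * QSform p r s (fun i => s i / ∑ j, s j) =
        σ2 * (p : ℝ) / ((∑ i, s i) ^ 2 * (1 + ((p : ℝ) - 1) * r))) ∧
    StrictAntiOn (fun r : ℝ => σ2 * QSform p r s (fun i => s i / ∑ j, s j))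
      (Set.Ioo 0 1) ∧
    Tendsto (fun r : ℝ => σ2 * QSform p r s (fun i => s i / ∑ j, s j)) (𝓝[<] 1)
      (𝓝 (σ2 / (∑ i, s i) ^ 2)) := by
  have hp1 : (1:ℝ) ≤ (p : ℝ) := by exact_mod_cast Nat.one_le_of_lt hp
  have hpR : (0:ℝ) < (p : ℝ) := by linarith
  have hT : 0 < ∑ i, s i :=
    Finset.sum_pos (fun i _ => hs i) (Finset.univ_nonempty_iff.mpr ⟨⟨0, by omega⟩⟩)
  have hT2 : 0 < (∑ i, s i) ^ 2 := by positivity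
  have key : ∀ r ∈ Set.Ioo (0 : ℝ) 1,
      σ2 * QSform p r s (fun i => s i / ∑ j, s j) =
        σ2 * (p : ℝ) / ((∑ i, s i) ^ 2 * (1 + ((p : ℝ) - 1) * r)) := by
    intro r hr
    rw [QSform_eq p hp r hr s hs, mul_div_assoc]
  refine ⟨key, ?_, ?_⟩
  · intro x hx y hy hxy
    simp only
    rw [key x hx, key y hy]
    apply div_lt_div_of_pos_left (by positivity)
    · have : (0:ℝ) < 1 + ((p : ℝ) - 1) * x := by nlinarith [hx.1]
      positivity
    · have hp2 : (2:ℝ) ≤ (p : ℝ) := by exact_mod_cast hp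
      have : ((p : ℝ) - 1) * x < ((p : ℝ) - 1) * y :=
        mul_lt_mul_of_pos_left hxy (by linarith)
      nlinarith
  · have hev : (fun r : ℝ => σ2 * QSform p r s (fun i => s i / ∑ j, s j)) =ᶠ[𝓝[<] 1]
        (fun r : ℝ => σ2 * (p : ℝ) / ((∑ i, s i) ^ 2 * (1 + ((p : ℝ) - 1) * r))) := by
      filter_upwards [Ioo_mem_nhdsLT_of_mem (Set.mem_Ioc.mpr ⟨zero_lt_one, le_refl 1⟩)]
        with r hr using key r hr
    rw [Filter.tendsto_congr' hev]
    have hden : (∑ i, s i) ^ 2 * (1 + ((p : ℝ) - 1) * 1) ≠ 0 := by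
      have : (0:ℝ) < 1 + ((p : ℝ) - 1) * 1 := by nlinarith
      positivity
    have hcont : Tendsto (fun r : ℝ => σ2 * (p : ℝ) / ((∑ i, s i) ^ 2 * (1 + ((p : ℝ) - 1) * r)))
        (𝓝 1) (𝓝 (σ2 * (p : ℝ) / ((∑ i, s i) ^ 2 * (1 + ((p : ℝ) - 1) * 1)))) := by
      apply Tendsto.div tendsto_const_nhds
      · exact (tendsto_const_nhds.mul ((tendsto_const_nhds.add
          (tendsto_const_nhds.mul tendsto_id))))
      · exact hden
    have : σ2 * (p : ℝ) / ((∑ i, s i) ^ 2 * (1 + ((p : ℝ) - 1) * 1)) = σ2 / (∑ i, s i) ^ 2 := by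
      have hp0 : (p : ℝ) ≠ 0 := hpR.ne'
      field_simp
      rw [show (1:ℝ) + ((p:ℝ) - 1) = p by ring, div_self hp0]
    rw [← this]
    exact hcont.mono_left nhdsWithin_le_nhds
end
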